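/- Let G be a graph with no 2-factor and (A,B) a biased barrier of G. Then B is an independent set in G. -/

import Mathlib

open SimpleGraph

variable {V : Type*}

/-- The number of (ordered) pairs giving edges between `X` and `Y`;
for disjoint `X`, `Y` this is the number of edges between `X` and `Y`. -/
noncomputable def eB (G : SimpleGraph V) (X Y : Set V) : ℕ :=
  Set.ncard {p : V × V | p.1 ∈ X ∧ p.2 ∈ Y ∧ G.Adj p.1 p.2}

/-- The vertex set (in `V`) of a connected component of the induced subgraph on `U`. -/
def compSupp (G : SimpleGraph V) (U : Set V)
    (C : (G.induce U).ConnectedComponent) : Set V :=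
  Subtype.val '' C.supp

/-- `δ(A,B) = 2|A| - 2|B| + ∑_{v ∈ B} d_{G-A}(v) - o(A,B)`, where `o(A,B)` is the
number of components of `G - (A ∪ B)` sending an odd number of edges to `B`. -/
noncomputable def deltaAB (G : SimpleGraph V) (A B : Set V) : ℤ :=
  2 * A.ncard - 2 * B.ncard + eB G B Aᶜ -
    Nat.card {C : (G.induce (A ∪ B)ᶜ).ConnectedComponent //
      Odd (eB G (compSupp G (A ∪ B)ᶜ C) B)}

/-- A barrier (Tutte pair) of `G`. -/
def IsBarrier (G : SimpleGraph V) (A B : Set V) : Prop :=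
  Disjoint A B ∧ deltaAB G A B ≤ -2

/-- A biased barrier: a barrier maximizing `|A|` and, subject to that, minimizing `|B|`. -/
def IsBiasedBarrier (G : SimpleGraph V) (A B : Set V) : Prop :=
  IsBarrier G A B ∧
    ∀ A' B' : Set V, IsBarrier G A' B' →
      A'.ncard ≤ A.ncard ∧ (A'.ncard = A.ncard → B.ncard ≤ B'.ncard)

/-- A `2`-factor is a `2`-regular spanning subgraph. -/
def HasTwoFactor (G : SimpleGraph V) : Prop :=
  ∃ H : SimpleGraph V, H ≤ G ∧ ∀ v : V, (H.neighborSet v).ncard = 2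

/-- The number of components of `G - S`. -/
noncomputable def numComp (G : SimpleGraph V) (S : Set V) : ℕ :=
  Nat.card ((G.induce Sᶜ).ConnectedComponent)

/-- `G` is `t`-tough: every vertex cut `S` satisfies `|S| ≥ t · c(G - S)`. -/
def Tough (t : ℝ) (G : SimpleGraph V) : Prop :=
  ∀ S : Set V, 2 ≤ numComp G S → t * (numComp G S : ℝ) ≤ (S.ncard : ℝ)

/-- The toughness `τ(G) = min_S |S| / c(G - S)` over vertex cuts `S`. -/
noncomputable def toughness (G : SimpleGraph V) : ℝ :=
  sInf {r : ℝ | ∃ S : Set V, 2 ≤ numComp G S ∧ r = (S.ncard : ℝ) / (numComp G S : ℝ)}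

/-- `G` is `k`-connected. -/
def KConnected (k : ℕ) (G : SimpleGraph V) : Prop :=
  k < Nat.card V ∧ ∀ S : Set V, S.ncard < k → (G.induce Sᶜ).Connected

/-- The independence number `α(G)`. -/
noncomputable def indepNum (G : SimpleGraph V) : ℕ :=
  sSup {n : ℕ | ∃ s : Set V, (∀ u ∈ s, ∀ v ∈ s, ¬ G.Adj u v) ∧ s.ncard = n}

/-- The minimum degree `δ(G)`. -/
noncomputable def minDeg (G : SimpleGraph V) : ℕ :=
  sInf {d : ℕ | ∃ v : V, (G.neighborSet v).ncard = d}

/-- `H` occurs as an induced subgraph of `G`. -/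
def IsInducedCopy {W : Type*} (H : SimpleGraph W) (G : SimpleGraph V) : Prop :=
  ∃ f : W ↪ V, ∀ a b : W, G.Adj (f a) (f b) ↔ H.Adj a b

/-- The disjoint union `P_m ∪ k·P_1` of a path on `m` vertices and `k` isolated vertices. -/
def pathUnion (m k : ℕ) : SimpleGraph (Fin m ⊕ Fin k) where
  Adj a b := ∃ i j : Fin m, a = Sum.inl i ∧ b = Sum.inl j ∧ (pathGraph m).Adj i j
  symm := by constructor; rintro a b ⟨i, j, rfl, rfl, h⟩; exact ⟨j, i, rfl, rfl, h.symm⟩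
  loopless := by
    constructor
    rintro a ⟨i, j, rfl, hj, h⟩
    obtain rfl := Sum.inl.inj hj
    exact (pathGraph m).loopless.irrefl i h

/-- The join `G ∨ H` of two graphs. -/
def joinG {α β : Type*} (G : SimpleGraph α) (H : SimpleGraph β) :
    SimpleGraph (α ⊕ β) where
  Adj x y :=
    match x, y with
    | Sum.inl a, Sum.inl b => G.Adj a b
    | Sum.inr a, Sum.inr b => H.Adj a b
    | _, _ => True
  symm := by constructor; rintro (a | a) (b | b) h <;> simp_all <;> exact h.symm
  loopless := by constructor; rintro (a | a) h <;> simp_all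

/-- `a` disjoint copies of the complete graph `K_b`. -/
def cliquesG (a b : ℕ) : SimpleGraph (Fin a × Fin b) where
  Adj p q := p.1 = q.1 ∧ p.2 ≠ q.2
  symm := by constructor; rintro p q ⟨h1, h2⟩; exact ⟨h1.symm, h2.symm⟩
  loopless := by constructor; rintro p ⟨_, h⟩; exact h rfl

/-- The graph `H_n`: `K_n ∨ (K̄_{2n+1} ∪ K_{2n+1})` together with a perfect matching
between the independent part and the clique part. -/
def Hgraph (n : ℕ) :
    SimpleGraph (Fin n ⊕ (Fin (2 * n + 1) ⊕ Fin (2 * n + 1))) where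
  Adj x y := x ≠ y ∧
    match x, y with
    | Sum.inl _, _ => True
    | _, Sum.inl _ => True
    | Sum.inr (Sum.inl _), Sum.inr (Sum.inl _) => False
    | Sum.inr (Sum.inr _), Sum.inr (Sum.inr _) => True
    | Sum.inr (Sum.inl i), Sum.inr (Sum.inr j) => i = j
    | Sum.inr (Sum.inr i), Sum.inr (Sum.inl j) => i = j
  symm := by
    constructor
    rintro (a | a | a) (b | b | b) ⟨hne, h⟩ <;>
      exact ⟨Ne.symm hne, by simp_all⟩
  loopless := by constructor; rintro x ⟨hne, _⟩; exact hne rfl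


section Helpers

set_option linter.unusedSectionVars false


private lemma even_card_invol {α : Type*} [DecidableEq α] (f : α → α) (s : Finset α)
    (hmem : ∀ a ∈ s, f a ∈ s) (hinv : ∀ a ∈ s, f (f a) = a)
    (hne : ∀ a ∈ s, f a ≠ a) : Even s.card := by
  suffices key : ∀ n (s : Finset α), (∀ a ∈ s, f a ∈ s) → (∀ a ∈ s, f (f a) = a) →
      (∀ a ∈ s, f a ≠ a) → s.card = n → Even s.card from
    key s.card s hmem hinv hne rfl
  clear hmem hinv hne s
  intro n
  induction n using Nat.strong_induction_on with
  | _ n ih =>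
  intro s hmem hinv hne hn
  subst hn
  rcases s.eq_empty_or_nonempty with rfl | ⟨a, ha⟩
  · simp
  have hfa : f a ∈ s := hmem a ha
  have hfa' : f a ≠ a := hne a ha
  have h2 : 2 ≤ s.card := by
    have hsub : ({a, f a} : Finset α) ⊆ s := by
      intro x hx
      rcases Finset.mem_insert.mp hx with rfl | hx
      · exact ha
      · rcases Finset.mem_singleton.mp hx with rfl; exact hfa
    have := Finset.card_le_card hsub
    rwa [Finset.card_pair hfa'.symm] at this
  set t := (s.erase a).erase (f a) with ht
  have htcard : t.card = s.card - 2 := by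
    rw [ht, Finset.card_erase_of_mem (Finset.mem_erase.mpr ⟨hfa', hfa⟩),
      Finset.card_erase_of_mem ha]
    omega
  have hmemt : ∀ x, x ∈ t ↔ x ≠ f a ∧ x ≠ a ∧ x ∈ s := by
    intro x
    simp [ht, Finset.mem_erase, and_assoc]
  have h1 : ∀ b ∈ t, f b ∈ t := by
    intro b hb
    obtain ⟨hb1, hb2, hb3⟩ := (hmemt b).mp hb
    refine (hmemt (f b)).mpr ⟨?_, ?_, hmem b hb3⟩
    · intro h
      exact hb2 (by rw [← hinv b hb3, h, hinv a ha])
    · intro h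
      exact hb1 (by rw [← hinv b hb3, h])
  have h2' : ∀ b ∈ t, f (f b) = b := fun b hb => hinv b ((hmemt b).mp hb).2.2
  have h3' : ∀ b ∈ t, f b ≠ b := fun b hb => hne b ((hmemt b).mp hb).2.2
  obtain ⟨r, hr⟩ := ih t.card (by omega) t h1 h2' h3' rfl
  exact ⟨r + 1, by omega⟩

variable [Fintype V]

private lemma eB_union_left (G : SimpleGraph V) {X₁ X₂ : Set V} (Y : Set V)
    (h : Disjoint X₁ X₂) : eB G (X₁ ∪ X₂) Y = eB G X₁ Y + eB G X₂ Y := by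
  unfold eB
  rw [← Set.ncard_union_eq ?_ (Set.toFinite _) (Set.toFinite _)]
  · congr 1
    ext p
    simp only [Set.mem_setOf_eq, Set.mem_union]
    tauto
  · rw [Set.disjoint_left]
    rintro ⟨p1, p2⟩ ⟨h1, -⟩ ⟨h2, -⟩
    exact (Set.disjoint_left.mp h h1) h2

private lemma eB_union_right (G : SimpleGraph V) (X : Set V) {Y₁ Y₂ : Set V}
    (h : Disjoint Y₁ Y₂) : eB G X (Y₁ ∪ Y₂) = eB G X Y₁ + eB G X Y₂ := by
  unfold eB
  rw [← Set.ncard_union_eq ?_ (Set.toFinite _) (Set.toFinite _)]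
  · congr 1
    ext p
    simp only [Set.mem_setOf_eq, Set.mem_union]
    tauto
  · rw [Set.disjoint_left]
    rintro ⟨p1, p2⟩ ⟨-, h1, -⟩ ⟨-, h2, -⟩
    exact (Set.disjoint_left.mp h h1) h2

private lemma eB_comm (G : SimpleGraph V) (X Y : Set V) : eB G X Y = eB G Y X := by
  unfold eB
  have : {p : V × V | p.1 ∈ Y ∧ p.2 ∈ X ∧ G.Adj p.1 p.2} =
      Prod.swap '' {p : V × V | p.1 ∈ X ∧ p.2 ∈ Y ∧ G.Adj p.1 p.2} := by
    ext ⟨a, b⟩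
    constructor
    · rintro ⟨h1, h2, h3⟩
      exact ⟨(b, a), ⟨h2, h1, h3.symm⟩, rfl⟩
    · rintro ⟨⟨c, d⟩, ⟨h1, h2, h3⟩, heq⟩
      cases heq
      exact ⟨h2, h1, h3.symm⟩
  rw [this, Set.ncard_image_of_injective _ Prod.swap_injective]

private lemma eB_self_even (G : SimpleGraph V) (X : Set V) : Even (eB G X X) := by
  classical
  unfold eB
  rw [Set.ncard_eq_toFinset_card _ (Set.toFinite _)]
  apply even_card_invol Prod.swap
  · rintro ⟨a, b⟩ hab
    rw [Set.Finite.mem_toFinset] at hab ⊢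
    exact ⟨hab.2.1, hab.1, hab.2.2.symm⟩
  · rintro ⟨a, b⟩ _; rfl
  · rintro ⟨a, b⟩ hab h
    rw [Set.Finite.mem_toFinset] at hab
    have : b = a := congrArg Prod.fst h
    subst this
    exact G.loopless.irrefl _ hab.2.2

private lemma eB_diag_zero (G : SimpleGraph V) (u : V) : eB G {u} {u} = 0 := by
  unfold eB
  rw [Set.ncard_eq_zero (Set.toFinite _)]
  ext ⟨a, b⟩
  simp only [Set.mem_setOf_eq, Set.mem_singleton_iff, Set.mem_empty_iff_false, iff_false]
  rintro ⟨rfl, rfl, h⟩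
  exact G.loopless.irrefl _ h

private lemma sum_mod_two {ι : Type*} [Fintype ι] (g : ι → ℕ) :
    (∑ i, g i) % 2 = (Finset.univ.filter fun i => Odd (g i)).card % 2 := by
  classical
  rw [Finset.sum_nat_mod, Finset.card_filter]
  congr 1
  apply Finset.sum_congr rfl
  intro i _
  by_cases h : Odd (g i)
  · simp [h, Nat.odd_iff.mp h]
  · simp [h, Nat.even_iff.mp (Nat.not_odd_iff_even.mp h)]

private lemma eB_comp_mod_two (G : SimpleGraph V) (W Y : Set V) :
    eB G W Y % 2 =
      Nat.card {C : (G.induce W).ConnectedComponent //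
        Odd (eB G (compSupp G W C) Y)} % 2 := by
  classical
  haveI : Fintype ((G.induce W).ConnectedComponent) := Fintype.ofFinite _
  rcases Set.eq_empty_or_nonempty W with hW | ⟨w0, hw0⟩
  · haveI : IsEmpty ((G.induce W).ConnectedComponent) := by
      constructor
      intro C
      refine C.ind ?_
      intro v
      exact Set.eq_empty_iff_forall_notMem.mp hW _ v.2
    have h1 : eB G W Y = 0 := by
      unfold eB
      rw [Set.ncard_eq_zero (Set.toFinite _)]
      ext ⟨a, b⟩
      simp only [Set.mem_setOf_eq, Set.mem_empty_iff_false, iff_false]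
      rintro ⟨h1, -, -⟩
      exact Set.eq_empty_iff_forall_notMem.mp hW _ h1
    rw [h1, Nat.card_of_isEmpty]
  · have key : eB G W Y = ∑ C : (G.induce W).ConnectedComponent,
        eB G (compSupp G W C) Y := by
      unfold eB
      rw [Set.ncard_eq_toFinset_card _ (Set.toFinite _)]
      rw [Finset.card_eq_sum_card_fiberwise
        (f := fun p : V × V => if h : p.1 ∈ W then (G.induce W).connectedComponentMk ⟨p.1, h⟩
          else (G.induce W).connectedComponentMk ⟨w0, hw0⟩)
        (t := Finset.univ) (fun x _ => Finset.mem_univ _)]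
      apply Finset.sum_congr rfl
      intro C _
      rw [Set.ncard_eq_toFinset_card _ (Set.toFinite _)]
      congr 1
      ext ⟨a, b⟩
      simp only [Finset.mem_filter, Set.Finite.mem_toFinset, Set.mem_setOf_eq]
      constructor
      · rintro ⟨⟨h1, h2, h3⟩, hf⟩
        rw [dif_pos h1] at hf
        exact ⟨⟨⟨a, h1⟩, hf, rfl⟩, h2, h3⟩
      · rintro ⟨⟨x, hx, hval⟩, h2, h3⟩
        subst hval
        refine ⟨⟨x.2, h2, h3⟩, ?_⟩
        rw [dif_pos x.2]
        exact hx
    rw [key, sum_mod_two]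
    congr 1
    rw [Nat.card_eq_fintype_card, Fintype.card_subtype]

private lemma deltaAB_even (G : SimpleGraph V) {A B : Set V} (h : Disjoint A B) :
    Even (deltaAB G A B) := by
  classical
  unfold deltaAB
  have hdisjBW : Disjoint B ((A ∪ B)ᶜ) := by
    rw [Set.disjoint_left]
    intro x hx hx'
    exact hx' (Or.inr hx)
  have hAc : Aᶜ = B ∪ (A ∪ B)ᶜ := by
    ext x
    simp only [Set.mem_compl_iff, Set.mem_union, not_or]
    constructor
    · intro hx
      by_cases hb : x ∈ B
      · exact Or.inl hb
      · exact Or.inr ⟨hx, hb⟩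
    · rintro (hb | ⟨ha, -⟩)
      · exact fun hA => Set.disjoint_left.mp h hA hb
      · exact ha
  have hsplit : eB G B Aᶜ = eB G B B + eB G B ((A ∪ B)ᶜ) := by
    rw [hAc]
    exact eB_union_right G B hdisjBW
  obtain ⟨m, hm⟩ := eB_self_even G B
  have hcomm : eB G B ((A ∪ B)ᶜ) = eB G ((A ∪ B)ᶜ) B := eB_comm G B ((A ∪ B)ᶜ)
  have hmod := eB_comp_mod_two G ((A ∪ B)ᶜ) B
  rw [Int.even_iff]
  omega

private lemma delta_step (G : SimpleGraph V) {A B : Set V} (hd : Disjoint A B) {u : V}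
    (hu : u ∈ B) :
    deltaAB G A (B \ {u}) + (eB G {u} (B \ {u}) : ℤ) ≤ deltaAB G A B + 2 := by
  classical
  set B' := B \ {u} with hB'
  set W := (A ∪ B)ᶜ with hWdef
  have huA : u ∉ A := fun hA => Set.disjoint_left.mp hd hA hu
  have huW : u ∉ W := fun hW => hW (Or.inr hu)
  have hW' : (A ∪ B')ᶜ = insert u W := by
    ext x
    simp only [Set.mem_compl_iff, Set.mem_union, Set.mem_insert_iff, hB', Set.mem_diff,
      Set.mem_singleton_iff, not_or, hWdef, not_and, not_not]
    constructor
    · rintro ⟨hxA, hxB'⟩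
      by_cases hxB : x ∈ B
      · exact Or.inl (hxB' hxB)
      · exact Or.inr ⟨hxA, hxB⟩
    · rintro (rfl | ⟨hxA, hxB⟩)
      · exact ⟨huA, fun _ => rfl⟩
      · exact ⟨hxA, fun h => absurd h hxB⟩
  unfold deltaAB
  rw [hW']
  rw [← hWdef]
  set W' : Set V := insert u W with hW'def
  have hWsub : W ⊆ W' := Set.subset_insert u W
  let hom : G.induce W →g G.induce W' := ⟨fun x => ⟨x.1, hWsub x.2⟩, fun {a b} h => h⟩
  have mem_cs : ∀ (z : V) (hz : z ∈ W) (C : (G.induce W).ConnectedComponent),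
      z ∈ compSupp G W C ↔ (G.induce W).connectedComponentMk ⟨z, hz⟩ = C := by
    intro z hz C
    constructor
    · rintro ⟨z2, hz2, rfl⟩
      exact hz2
    · intro h
      exact ⟨⟨z, hz⟩, h, rfl⟩
  have cs_sub : ∀ C : (G.induce W).ConnectedComponent, compSupp G W C ⊆ W := by
    rintro C y ⟨y2, -, rfl⟩
    exact y2.2
  have walk_stays : ∀ {a b : ↥W'} (p : (G.induce W').Walk a b) (ha : (a : V) ∈ W),
      (∀ z ∈ compSupp G W ((G.induce W).connectedComponentMk ⟨(a : V), ha⟩), ¬ G.Adj u z) →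
      ∃ hb : (b : V) ∈ W, (G.induce W).connectedComponentMk ⟨(b : V), hb⟩ =
        (G.induce W).connectedComponentMk ⟨(a : V), ha⟩ := by
    intro a b p
    induction p with
    | nil => intro ha _; exact ⟨ha, rfl⟩
    | cons hadj q ih =>
      rename_i x y z
      intro ha hunt
      have hadj' : G.Adj (x : V) (y : V) := hadj
      have hyW : (y : V) ∈ W := by
        rcases Set.mem_insert_iff.mp y.2 with hy | hy
        · exfalso
          apply hunt (x : V) ((mem_cs _ ha _).mpr rfl)
          rw [hy] at hadj'
          exact hadj'.symm
        · exact hy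
      have hadj2 : (G.induce W).Adj ⟨(y : V), hyW⟩ ⟨(x : V), ha⟩ := hadj'.symm
      have hcomp : (G.induce W).connectedComponentMk ⟨(y : V), hyW⟩ =
          (G.induce W).connectedComponentMk ⟨(x : V), ha⟩ :=
        ConnectedComponent.sound hadj2.reachable
      have hunt' : ∀ z ∈ compSupp G W
          ((G.induce W).connectedComponentMk ⟨(y : V), hyW⟩), ¬ G.Adj u z := by
        rw [hcomp]
        exact hunt
      obtain ⟨hb, hbc⟩ := ih hyW hunt'
      exact ⟨hb, hbc.trans hcomp⟩
  have supp_eq : ∀ (C : (G.induce W).ConnectedComponent),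
      (∀ z ∈ compSupp G W C, ¬ G.Adj u z) →
      compSupp G W' (C.map hom) = compSupp G W C := by
    intro C
    refine C.ind ?_
    intro x hunt
    ext y
    constructor
    · rintro ⟨y2, hy2, rfl⟩
      have hreach : (G.induce W').Reachable (hom x) y2 :=
        (ConnectedComponent.eq.mp hy2).symm
      obtain ⟨p⟩ := hreach
      obtain ⟨hb, hbc⟩ := walk_stays p x.2 hunt
      exact ⟨⟨(y2 : V), hb⟩, hbc, rfl⟩
    · rintro ⟨x2, hx2, rfl⟩
      have hreach : (G.induce W).Reachable x2 x := ConnectedComponent.eq.mp hx2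
      exact ⟨hom x2, ConnectedComponent.sound (hreach.map hom), rfl⟩
  set T : Set ((G.induce W).ConnectedComponent) :=
    {C | ∃ z ∈ compSupp G W C, G.Adj u z} with hT
  have hk : T.ncard ≤ eB G {u} W := by
    have hinj : Nat.card T ≤
        Nat.card {p : V × V | p.1 ∈ ({u} : Set V) ∧ p.2 ∈ W ∧ G.Adj p.1 p.2} := by
      apply Nat.card_le_card_of_injective (f := fun C : T =>
        (⟨(u, C.2.choose), rfl, cs_sub _ C.2.choose_spec.1, C.2.choose_spec.2⟩ :
          {p : V × V | p.1 ∈ ({u} : Set V) ∧ p.2 ∈ W ∧ G.Adj p.1 p.2}))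
      intro C1 C2 heq
      have hz : C1.2.choose = C2.2.choose :=
        congrArg (fun q : {p : V × V | p.1 ∈ ({u} : Set V) ∧ p.2 ∈ W ∧ G.Adj p.1 p.2} =>
          q.1.2) heq
      have h1 := C1.2.choose_spec
      have h2 := C2.2.choose_spec
      rw [← hz] at h2
      have hzW : C1.2.choose ∈ W := cs_sub _ h1.1
      apply Subtype.ext
      rw [← (mem_cs _ hzW C1.1).mp h1.1, ← (mem_cs _ hzW C2.1).mp h2.1]
    rw [Nat.card_coe_set_eq, Nat.card_coe_set_eq] at hinj
    exact hinj
  have hdisjB'u : Disjoint B' ({u} : Set V) := by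
    rw [Set.disjoint_left]
    rintro x ⟨-, hx⟩ rfl
    exact hx rfl
  have hBsplit : B = B' ∪ {u} := by
    ext x
    simp only [hB', Set.mem_union, Set.mem_diff, Set.mem_singleton_iff]
    constructor
    · intro hx
      by_cases hxu : x = u
      · exact Or.inr hxu
      · exact Or.inl ⟨hx, hxu⟩
    · rintro (⟨hx, -⟩ | rfl)
      · exact hx
      · exact hu
  have huntouched_eq : ∀ C : (G.induce W).ConnectedComponent, C ∉ T →
      eB G (compSupp G W C) B' = eB G (compSupp G W C) B := by
    intro C hCT
    have hsp : eB G (compSupp G W C) B =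
        eB G (compSupp G W C) B' + eB G (compSupp G W C) {u} := by
      conv_lhs => rw [hBsplit]
      exact eB_union_right G _ hdisjB'u
    have hzero : eB G (compSupp G W C) {u} = 0 := by
      unfold eB
      rw [Set.ncard_eq_zero (Set.toFinite _)]
      ext ⟨a, b⟩
      simp only [Set.mem_setOf_eq, Set.mem_singleton_iff, Set.mem_empty_iff_false, iff_false,
        not_and]
      rintro h1 rfl h3
      exact hCT ⟨a, h1, h3.symm⟩
    omega
  have ho : Nat.card {C : (G.induce W).ConnectedComponent //
        Odd (eB G (compSupp G W C) B)} ≤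
      Nat.card {C : (G.induce W').ConnectedComponent //
        Odd (eB G (compSupp G W' C) B')} + T.ncard := by
    set SOdd : Set ((G.induce W).ConnectedComponent) :=
      {C | Odd (eB G (compSupp G W C) B)} with hSOdd
    set SOU : Set ((G.induce W).ConnectedComponent) :=
      {C | Odd (eB G (compSupp G W C) B) ∧ C ∉ T} with hSOU
    have hsub : SOdd ⊆ SOU ∪ T := by
      intro C hC
      by_cases hCT : C ∈ T
      · exact Or.inr hCT
      · exact Or.inl ⟨hC, hCT⟩
    have h1 : Nat.card {C : (G.induce W).ConnectedComponent //
        Odd (eB G (compSupp G W C) B)} = SOdd.ncard := Nat.card_coe_set_eq SOdd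
    have h2 : SOdd.ncard ≤ SOU.ncard + T.ncard :=
      le_trans (Set.ncard_le_ncard hsub (Set.toFinite _)) (Set.ncard_union_le _ _)
    have hmap : ∀ C : SOU, Odd (eB G (compSupp G W' (ConnectedComponent.map hom C.1)) B') := by
      intro C
      obtain ⟨hodd, hCT⟩ := C.2
      rw [supp_eq C.1 (fun z hz hadj => hCT ⟨z, hz, hadj⟩), huntouched_eq C.1 hCT]
      exact hodd
    have csinj : ∀ C C' : (G.induce W).ConnectedComponent,
        compSupp G W C = compSupp G W C' → C = C' := by
      intro C C' hcc
      exact ConnectedComponent.supp_injective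
        (Set.image_injective.mpr Subtype.val_injective hcc)
    have h3 : SOU.ncard ≤ Nat.card {C : (G.induce W').ConnectedComponent //
        Odd (eB G (compSupp G W' C) B')} := by
      rw [← Nat.card_coe_set_eq]
      apply Nat.card_le_card_of_injective (f := fun C : SOU =>
        (⟨ConnectedComponent.map hom C.1, hmap C⟩ : {C : (G.induce W').ConnectedComponent //
          Odd (eB G (compSupp G W' C) B')}))
      intro C1 C2 heq
      have hmm : ConnectedComponent.map hom C1.1 = ConnectedComponent.map hom C2.1 :=
        congrArg Subtype.val heq
      have unt1 : ∀ z ∈ compSupp G W C1.1, ¬ G.Adj u z :=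
        fun z hz hadj => C1.2.2 ⟨z, hz, hadj⟩
      have unt2 : ∀ z ∈ compSupp G W C2.1, ¬ G.Adj u z :=
        fun z hz hadj => C2.2.2 ⟨z, hz, hadj⟩
      have hs : compSupp G W C1.1 = compSupp G W C2.1 := by
        rw [← supp_eq C1.1 unt1, ← supp_eq C2.1 unt2, hmm]
      exact Subtype.ext (csinj _ _ hs)
    omega
  have hdisjB'W' : Disjoint B' W' := by
    rw [Set.disjoint_left]
    rintro x ⟨hxB, hxu⟩ hxW'
    rcases Set.mem_insert_iff.mp hxW' with rfl | hxW
    · exact hxu rfl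
    · exact hxW (Or.inr hxB)
  have hAc : Aᶜ = B' ∪ W' := by
    ext x
    simp only [Set.mem_compl_iff, Set.mem_union, hB', Set.mem_diff, Set.mem_singleton_iff,
      hW'def, Set.mem_insert_iff, hWdef, not_or]
    constructor
    · intro hxA
      by_cases hxB : x ∈ B
      · by_cases hxu : x = u
        · exact Or.inr (Or.inl hxu)
        · exact Or.inl ⟨hxB, hxu⟩
      · exact Or.inr (Or.inr ⟨hxA, hxB⟩)
    · rintro (⟨hxB, -⟩ | (rfl | ⟨hxA, -⟩))
      · exact fun hA => Set.disjoint_left.mp hd hA hxB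
      · exact huA
      · exact hxA
  have f1 : eB G B Aᶜ = eB G B' Aᶜ + eB G {u} Aᶜ := by
    conv_lhs => rw [hBsplit]
    exact eB_union_left G Aᶜ hdisjB'u
  have f2 : eB G {u} Aᶜ = eB G {u} B' + eB G {u} W' := by
    conv_lhs => rw [hAc]
    exact eB_union_right G {u} hdisjB'W'
  have hdisjuW : Disjoint ({u} : Set V) W := by
    rw [Set.disjoint_left]
    intro x hx hxW
    rw [Set.mem_singleton_iff] at hx
    subst hx
    exact huW hxW
  have f3 : eB G {u} W' = eB G {u} W := by
    rw [hW'def, Set.insert_eq, eB_union_right G {u} hdisjuW, eB_diag_zero]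
    omega
  have f4 : B'.ncard = B.ncard - 1 := by
    rw [hB']
    exact Set.ncard_diff_singleton_of_mem hu
  have f5 : 1 ≤ B.ncard := by
    have := (Set.ncard_pos (Set.toFinite _)).mpr ⟨u, hu⟩
    omega
  omega

end Helpers

theorem stmt4 {V : Type*} [Fintype V] (G : SimpleGraph V) (A B : Set V)
    (hG : ¬ HasTwoFactor G) (hAB : IsBiasedBarrier G A B) :
    ∀ u ∈ B, ∀ v ∈ B, ¬ G.Adj u v := by
  classical
  intro u hu v hv hadj
  obtain ⟨⟨hdisj, hdelta⟩, hmin⟩ := hAB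
  have hne : v ≠ u := hadj.ne'
  have hv' : v ∈ B \ {u} := ⟨hv, hne⟩
  have he1 : 1 ≤ eB G {u} (B \ {u}) := by
    have hmem : ((u, v) : V × V) ∈
        {p : V × V | p.1 ∈ ({u} : Set V) ∧ p.2 ∈ B \ {u} ∧ G.Adj p.1 p.2} :=
      ⟨rfl, hv', hadj⟩
    have := (Set.ncard_pos (Set.toFinite _)).mpr ⟨_, hmem⟩
    unfold eB
    omega
  have hstep := delta_step G hdisj hu
  have hdisj' : Disjoint A (B \ {u}) := hdisj.mono_right Set.diff_subset
  obtain ⟨m, hm⟩ := deltaAB_even G hdisj'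
  have hbar' : deltaAB G A (B \ {u}) ≤ -2 := by omega
  have hcard := (hmin A (B \ {u}) ⟨hdisj', hbar'⟩).2 rfl
  have hB'card : (B \ {u}).ncard = B.ncard - 1 :=
    Set.ncard_diff_singleton_of_mem hu
  have hBpos : 0 < B.ncard := (Set.ncard_pos (Set.toFinite _)).mpr ⟨u, hu⟩
  omega
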